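/- For each fixed γ ∈ (0,1), the map w ↦ Q_γ(w) is continuous and strictly increasing on T; moreover Q_γ(w) → −∞ as w decreases to a_1 (along T) and Q_γ(w) → ∞ as w increases to b_K (along T). -/

import Mathlib

open Filter MeasureTheory ProbabilityTheory Set
open Real
open scoped NNReal ENNReal

/-- The cdf of the normal distribution with mean `θ` and variance `ς²`, truncated to the
set `T`: `F^T_{θ,ς²}(w) = P(V ≤ w ∧ V ∈ T) / P(V ∈ T)` for `V ~ N(θ, ς²)`. -/
noncomputable def truncNormalCDF (ς : ℝ) (T : Set ℝ) (θ w : ℝ) : ℝ :=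
  ((gaussianReal θ (Real.toNNReal (ς ^ 2))) (Set.Iic w ∩ T)).toReal /
    ((gaussianReal θ (Real.toNNReal (ς ^ 2))) T).toReal

section Aux
open Real
open scoped NNReal ENNReal

namespace TruncAux

variable {v : ℝ≥0}

lemma gauss_open_pos (hv : v ≠ 0) (θ : ℝ) {S : Set ℝ} (hS : IsOpen S) (hne : S.Nonempty) :
    0 < gaussianReal θ v S := by
  rw [gaussianReal_apply θ hv]
  rw [lintegral_pos_iff_support (measurable_gaussianPDF θ v)]
  have hsupp : Function.support (gaussianPDF θ v) = univ := by
    ext x; simp [Function.mem_support, (gaussianPDF_pos θ hv x).ne']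
  rw [Measure.restrict_apply' hS.measurableSet, hsupp, univ_inter]
  exact hS.measure_pos volume hne

lemma gauss_pdf_le (θ : ℝ) (x : ℝ) : gaussianPDFReal θ v x ≤ (Real.sqrt (2 * π * v))⁻¹ := by
  rw [gaussianPDFReal]
  have h1 : Real.exp (-(x - θ) ^ 2 / (2 * v)) ≤ 1 := by
    rw [Real.exp_le_one_iff]
    apply div_nonpos_of_nonpos_of_nonneg
    · simp [sq_nonneg]
    · positivity
  nlinarith [inv_nonneg.2 (Real.sqrt_nonneg (2 * π * v))]

lemma gauss_Ioc_le (hv : v ≠ 0) (θ x y : ℝ) :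
    gaussianReal θ v (Ioc x y) ≤ ENNReal.ofReal ((Real.sqrt (2 * π * v))⁻¹ * (y - x)) := by
  rw [gaussianReal_apply θ hv]
  calc ∫⁻ z in Ioc x y, gaussianPDF θ v z
      ≤ ∫⁻ _ in Ioc x y, ENNReal.ofReal ((Real.sqrt (2 * π * v))⁻¹) := by
        refine setLIntegral_mono measurable_const fun z _ => ?_
        exact ENNReal.ofReal_le_ofReal (gauss_pdf_le θ z)
    _ = ENNReal.ofReal ((Real.sqrt (2 * π * v))⁻¹) * volume (Ioc x y) := by
        rw [setLIntegral_const]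
    _ ≤ ENNReal.ofReal ((Real.sqrt (2 * π * v))⁻¹ * (y - x)) := by
        rw [Real.volume_Ioc, ENNReal.ofReal_mul (by positivity)]

lemma pdf_ratio (hv : v ≠ 0) (θ₁ θ₂ x : ℝ) :
    gaussianPDFReal θ₂ v x =
      Real.exp ((θ₂ - θ₁) * (2 * x - θ₁ - θ₂) / (2 * v)) * gaussianPDFReal θ₁ v x := by
  have hv' : (0:ℝ) < v := by positivity
  rw [gaussianPDFReal, gaussianPDFReal]
  rw [mul_left_comm, ← Real.exp_add]
  congr 2
  field_simp
  ring

/-- Core MLR inequality. -/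
lemma key (hv : v ≠ 0) {θ₁ θ₂ w u : ℝ} (h12 : θ₁ < θ₂) {A B : Set ℝ}
    (hA : MeasurableSet A) (hB : MeasurableSet B) (hAw : A ⊆ Iic w) (hBw : B ⊆ Ioi w)
    (hApos : 0 < gaussianReal θ₁ v A) (hwu : w < u) (huB : Ioo w u ⊆ B) :
    gaussianReal θ₁ v B * gaussianReal θ₂ v A <
      gaussianReal θ₂ v B * gaussianReal θ₁ v A := by
  have hv' : (0:ℝ) < v := by positivity
  set g : ℝ → ℝ := fun x => Real.exp ((θ₂ - θ₁) * (2 * x - θ₁ - θ₂) / (2 * (v:ℝ))) with hg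
  have hgmono : StrictMono g := by
    intro x y hxy
    apply Real.exp_lt_exp.2
    apply div_lt_div_of_pos_right _ (by positivity)
    nlinarith
  have hgmeas : Measurable fun x => ENNReal.ofReal (g x) := by
    fun_prop
  have hμ2 : ∀ S : Set ℝ, gaussianReal θ₂ v S
      = ∫⁻ x in S, ENNReal.ofReal (g x) * gaussianPDF θ₁ v x := by
    intro S
    rw [gaussianReal_apply θ₂ hv]
    congr 1
    ext x
    rw [gaussianPDF, gaussianPDF, pdf_ratio hv θ₁ θ₂ x,
      ENNReal.ofReal_mul (Real.exp_nonneg _)]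
  have hμ1 : ∀ S : Set ℝ, gaussianReal θ₁ v S = ∫⁻ x in S, gaussianPDF θ₁ v x :=
    fun S => gaussianReal_apply θ₁ hv S
  have hAle : gaussianReal θ₂ v A ≤ ENNReal.ofReal (g w) * gaussianReal θ₁ v A := by
    rw [hμ2, hμ1, ← lintegral_const_mul _ (measurable_gaussianPDF θ₁ v)]
    refine setLIntegral_mono ((measurable_gaussianPDF θ₁ v).const_mul _) fun x hx => ?_
    gcongr
    exact hgmono.monotone (hAw hx)
  set m : ℝ := (w + u) / 2 with hm
  have hwm : w < m := by rw [hm]; linarith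
  have hmu : m < u := by rw [hm]; linarith
  set B₀ : Set ℝ := Ioo m u with hB₀
  have hB₀B : B₀ ⊆ B := fun x hx => huB ⟨lt_trans hwm hx.1, hx.2⟩
  have hB₀meas : MeasurableSet B₀ := measurableSet_Ioo
  have hB₀pos : 0 < gaussianReal θ₁ v B₀ :=
    gauss_open_pos hv θ₁ isOpen_Ioo (nonempty_Ioo.2 hmu)
  have hlow : ∀ (c : ℝ) (S : Set ℝ), S ⊆ B → (∀ x ∈ S, c ≤ g x) →
      ENNReal.ofReal c * gaussianReal θ₁ v S ≤ gaussianReal θ₂ v S := by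
    intro c S hSB hcS
    rw [hμ2, hμ1, ← lintegral_const_mul _ (measurable_gaussianPDF θ₁ v)]
    refine setLIntegral_mono (hgmeas.mul (measurable_gaussianPDF θ₁ v)) fun x hx => ?_
    gcongr
    exact hcS x hx
  have hfin : ∀ (θ : ℝ) (S : Set ℝ), gaussianReal θ v S ≠ ∞ := fun θ S =>
    (measure_lt_top _ _).ne
  have hsplit2 : gaussianReal θ₂ v B = gaussianReal θ₂ v B₀ + gaussianReal θ₂ v (B \ B₀) := by
    rw [← measure_inter_add_diff B hB₀meas, inter_eq_self_of_subset_right hB₀B]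
  have hsplit1 : gaussianReal θ₁ v B = gaussianReal θ₁ v B₀ + gaussianReal θ₁ v (B \ B₀) := by
    rw [← measure_inter_add_diff B hB₀meas, inter_eq_self_of_subset_right hB₀B]
  have hBgt : ENNReal.ofReal (g w) * gaussianReal θ₁ v B < gaussianReal θ₂ v B := by
    rw [hsplit1, hsplit2, mul_add]
    refine lt_of_lt_of_le (ENNReal.add_lt_add_of_lt_of_le
        (ENNReal.mul_ne_top ENNReal.ofReal_ne_top (hfin _ _)) ?_ le_rfl)
      (add_le_add (hlow (g m) B₀ hB₀B fun x hx => (hgmono.monotone hx.1.le))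
        (hlow (g w) (B \ B₀) (diff_subset.trans le_rfl)
          fun x hx => (hgmono.monotone (hBw (diff_subset hx)).le)))
    exact ENNReal.mul_lt_mul_left hB₀pos.ne' (hfin _ _)
        (ENNReal.ofReal_lt_ofReal_iff_of_nonneg (Real.exp_nonneg _) |>.2 (hgmono hwm))
  calc gaussianReal θ₁ v B * gaussianReal θ₂ v A
      ≤ gaussianReal θ₁ v B * (ENNReal.ofReal (g w) * gaussianReal θ₁ v A) := by gcongr
    _ = (ENNReal.ofReal (g w) * gaussianReal θ₁ v B) * gaussianReal θ₁ v A := by ring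
    _ < gaussianReal θ₂ v B * gaussianReal θ₁ v A :=
        ENNReal.mul_lt_mul_left hApos.ne' (hfin _ _) hBgt

end TruncAux
end Aux

/-- For each fixed `γ ∈ (0,1)`, the map `w ↦ Q_γ(w)` is continuous and strictly
increasing on `T`; moreover `Q_γ(w) → −∞` as `w` decreases to `a 0` along `T` and
`Q_γ(w) → ∞` as `w` increases to `b (K-1)` along `T`.  Here `Q : ℝ → ℝ` is any function
such that `Q w` solves `F^T_{Q w,ς²}(w) = γ` for every `w ∈ T`, and approaching an
(extended-real) endpoint along `T` is expressed by the filter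
`comap Real.toEReal (nhds endpoint) ⊓ principal T`. -/
theorem stmt_5
    (ς : ℝ) (hς : 0 < ς) (K : ℕ) (hK : 1 ≤ K) (a b : ℕ → EReal)
    (hab : ∀ i < K, a i < b i) (hba : ∀ i, i + 1 < K → b i < a (i + 1))
    (T : Set ℝ)
    (hT : T = ⋃ i ∈ Finset.range K, {x : ℝ | a i < (x : EReal) ∧ (x : EReal) < b i})
    (γ : ℝ) (hγ : γ ∈ Set.Ioo (0 : ℝ) 1) (Q : ℝ → ℝ)
    (hQ : ∀ w ∈ T, truncNormalCDF ς T (Q w) w = γ) :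
    ContinuousOn Q T ∧ StrictMonoOn Q T ∧
      Tendsto Q (comap Real.toEReal (nhds (a 0)) ⊓ Filter.principal T) atBot ∧
      Tendsto Q (comap Real.toEReal (nhds (b (K - 1))) ⊓ Filter.principal T) atTop := by
  obtain ⟨hγ0, hγ1⟩ := hγ
  set v : ℝ≥0 := Real.toNNReal (ς ^ 2) with hvdef
  have hv : v ≠ 0 := by
    simp only [hvdef, ne_eq, Real.toNNReal_eq_zero, not_le]
    positivity
  have hv' : (0:ℝ) < v := by
    rw [hvdef, Real.coe_toNNReal _ (by positivity : (0:ℝ) ≤ ς ^ 2)]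
    positivity
  set μ : ℝ → Measure ℝ := fun θ => gaussianReal θ v with hμdef
  have hfin : ∀ (θ : ℝ) (S : Set ℝ), μ θ S ≠ ∞ := fun θ S => (measure_lt_top _ _).ne
  have hFdef : ∀ θ w, truncNormalCDF ς T θ w = (μ θ (Iic w ∩ T)).toReal / (μ θ T).toReal :=
    fun θ w => rfl
  -- openness of T
  have hTopen : IsOpen T := by
    rw [hT]
    refine isOpen_biUnion fun i _ => ?_
    have h : {x : ℝ | a i < (x : EReal) ∧ (x : EReal) < b i}
        = Real.toEReal ⁻¹' (Ioo (a i) (b i)) := rfl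
    rw [h]
    exact (isOpen_Ioo).preimage continuous_coe_real_ereal
  have hTmeas : MeasurableSet T := hTopen.measurableSet
  have hmem : ∀ x : ℝ, x ∈ T ↔ ∃ i, i < K ∧ a i < (x : EReal) ∧ (x : EReal) < b i := by
    intro x
    simp only [hT, mem_iUnion, Finset.mem_range, mem_setOf_eq, exists_prop]
  have hK0 : 0 < K := hK
  have hTne : T.Nonempty := by
    obtain ⟨x, hx1, hx2⟩ := EReal.exists_between_coe_real (hab 0 hK0)
    exact ⟨x, (hmem x).2 ⟨0, hK0, hx1, hx2⟩⟩
  have hTpos : ∀ θ, 0 < μ θ T := fun θ => TruncAux.gauss_open_pos hv θ hTopen hTne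
  have hDpos : ∀ θ, 0 < (μ θ T).toReal := fun θ => ENNReal.toReal_pos (hTpos θ).ne' (hfin _ _)
  have hball : ∀ w ∈ T, ∃ δ > 0, Ioo (w - δ) (w + δ) ⊆ T := by
    intro w hw
    obtain ⟨δ, hδ, hsub⟩ := Metric.isOpen_iff.1 hTopen w hw
    exact ⟨δ, hδ, by rw [← Real.ball_eq_Ioo]; exact hsub⟩
  have hsum : ∀ θ w, (μ θ T).toReal = (μ θ (Iic w ∩ T)).toReal + (μ θ (Ioi w ∩ T)).toReal := by
    intro θ w
    rw [← ENNReal.toReal_add (hfin _ _) (hfin _ _)]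
    congr 1
    rw [inter_comm, inter_comm (Ioi w), ← measure_inter_add_diff T measurableSet_Iic]
    congr 1
    rw [diff_eq, compl_Iic]
  have hApos : ∀ (θ : ℝ), ∀ w ∈ T, 0 < μ θ (Iic w ∩ T) := by
    intro θ w hw
    obtain ⟨δ, hδ, hsub⟩ := hball w hw
    refine lt_of_lt_of_le (TruncAux.gauss_open_pos hv θ
      (isOpen_Ioo (a := w - δ) (b := w)) (nonempty_Ioo.2 (by linarith))) (measure_mono ?_)
    intro x hx
    exact ⟨le_of_lt hx.2, hsub ⟨hx.1, by linarith [hx.2]⟩⟩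
  -- strict antitone in θ
  have hanti : ∀ w ∈ T, StrictAnti (fun θ => truncNormalCDF ς T θ w) := by
    intro w hw θ₁ θ₂ h12
    obtain ⟨δ, hδ, hsub⟩ := hball w hw
    have hkey := TruncAux.key hv h12 (measurableSet_Iic.inter hTmeas)
      (measurableSet_Ioi.inter hTmeas) (inter_subset_left) (inter_subset_left)
      (hApos θ₁ w hw) (show w < w + δ by linarith)
      (fun x hx => ⟨hx.1, hsub ⟨by linarith [hx.1], hx.2⟩⟩)
    have hkey' : (μ θ₁ (Ioi w ∩ T)).toReal * (μ θ₂ (Iic w ∩ T)).toReal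
        < (μ θ₂ (Ioi w ∩ T)).toReal * (μ θ₁ (Iic w ∩ T)).toReal := by
      rw [← ENNReal.toReal_mul, ← ENNReal.toReal_mul]
      exact ENNReal.toReal_strict_mono (ENNReal.mul_ne_top (hfin _ _) (hfin _ _)) hkey
    have ha1 : 0 < (μ θ₁ (Iic w ∩ T)).toReal :=
      ENNReal.toReal_pos (hApos θ₁ w hw).ne' (hfin _ _)
    have ha2 : 0 < (μ θ₂ (Iic w ∩ T)).toReal :=
      ENNReal.toReal_pos (hApos θ₂ w hw).ne' (hfin _ _)
    have hb1 : 0 ≤ (μ θ₁ (Ioi w ∩ T)).toReal := ENNReal.toReal_nonneg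
    have hb2 : 0 ≤ (μ θ₂ (Ioi w ∩ T)).toReal := ENNReal.toReal_nonneg
    simp only [hFdef]
    rw [hsum θ₂ w, hsum θ₁ w, div_lt_div_iff₀ (by linarith) (by linarith)]
    nlinarith
  -- strict mono in w
  have hmonoW : ∀ (θ : ℝ), ∀ w₁ ∈ T, ∀ (w₂ : ℝ), w₁ < w₂ →
      truncNormalCDF ς T θ w₁ < truncNormalCDF ς T θ w₂ := by
    intro θ w₁ hw₁ w₂ h12
    obtain ⟨δ, hδ, hsub⟩ := hball w₁ hw₁
    set c := min w₂ (w₁ + δ) with hc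
    have hc1 : w₁ < c := lt_min h12 (by linarith)
    have hnum : μ θ (Iic w₁ ∩ T) < μ θ (Iic w₂ ∩ T) := by
      have hdisj : Disjoint (Iic w₁ ∩ T) (Ioo w₁ c) :=
        Set.disjoint_left.2 fun x hx hx' => absurd hx.1 (not_le.2 hx'.1)
      have hsub2 : (Iic w₁ ∩ T) ∪ Ioo w₁ c ⊆ Iic w₂ ∩ T := by
        rintro x (hx | hx)
        · exact ⟨hx.1.trans h12.le, hx.2⟩
        · refine ⟨le_of_lt (lt_of_lt_of_le hx.2 (min_le_left _ _)), hsub ⟨?_, ?_⟩⟩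
          · linarith [hx.1]
          · exact lt_of_lt_of_le hx.2 (min_le_right _ _)
      calc μ θ (Iic w₁ ∩ T) < μ θ (Iic w₁ ∩ T) + μ θ (Ioo w₁ c) :=
            ENNReal.lt_add_right (hfin _ _)
              (TruncAux.gauss_open_pos hv θ isOpen_Ioo (nonempty_Ioo.2 hc1)).ne'
        _ = μ θ ((Iic w₁ ∩ T) ∪ Ioo w₁ c) :=
            (measure_union hdisj measurableSet_Ioo).symm
        _ ≤ μ θ (Iic w₂ ∩ T) := measure_mono hsub2
    rw [hFdef, hFdef, div_lt_div_iff₀ (hDpos θ) (hDpos θ)]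
    have := ENNReal.toReal_strict_mono (hfin _ _) hnum
    nlinarith [hDpos θ]
  -- continuity in w
  have hCpos : 0 < (Real.sqrt (2 * π * (v:ℝ)))⁻¹ := by positivity
  set C : ℝ := (Real.sqrt (2 * π * (v:ℝ)))⁻¹ with hCdef
  have hcont : ∀ θ : ℝ, Continuous fun w => truncNormalCDF ς T θ w := by
    intro θ
    have hlip : ∀ w₁ w₂ : ℝ, w₁ ≤ w₂ →
        0 ≤ (μ θ (Iic w₂ ∩ T)).toReal - (μ θ (Iic w₁ ∩ T)).toReal ∧
        (μ θ (Iic w₂ ∩ T)).toReal - (μ θ (Iic w₁ ∩ T)).toReal ≤ C * (w₂ - w₁) := by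
      intro w₁ w₂ h
      constructor
      · rw [sub_nonneg]
        exact ENNReal.toReal_mono (hfin _ _)
          (measure_mono (inter_subset_inter_left T (Iic_subset_Iic.2 h)))
      · have hsub : Iic w₂ ∩ T ⊆ (Iic w₁ ∩ T) ∪ Ioc w₁ w₂ := by
          intro x hx
          rcases le_or_gt x w₁ with h' | h'
          · exact Or.inl ⟨h', hx.2⟩
          · exact Or.inr ⟨h', hx.1⟩
        have h1 : μ θ (Iic w₂ ∩ T) ≤ μ θ (Iic w₁ ∩ T) + μ θ (Ioc w₁ w₂) :=
          (measure_mono hsub).trans (measure_union_le _ _)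
        have h2 : (μ θ (Ioc w₁ w₂)).toReal ≤ C * (w₂ - w₁) := by
          refine (ENNReal.toReal_mono ENNReal.ofReal_ne_top
            (TruncAux.gauss_Ioc_le hv θ w₁ w₂)).trans ?_
          rw [ENNReal.toReal_ofReal (by nlinarith)]
        have h3 := ENNReal.toReal_mono
          (ENNReal.add_ne_top.2 ⟨hfin _ _, hfin _ _⟩) h1
        rw [ENNReal.toReal_add (hfin _ _) (hfin _ _)] at h3
        linarith
    have hlipN : LipschitzWith C.toNNReal (fun w => (μ θ (Iic w ∩ T)).toReal) := by
      apply LipschitzWith.of_dist_le_mul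
      intro x y
      rw [Real.dist_eq, Real.dist_eq, Real.coe_toNNReal _ hCpos.le]
      rcases le_total x y with h | h
      · obtain ⟨h1, h2⟩ := hlip x y h
        rw [abs_sub_comm, abs_of_nonneg h1, abs_sub_comm, abs_of_nonneg (sub_nonneg.2 h)]
        linarith
      · obtain ⟨h1, h2⟩ := hlip y x h
        rw [abs_of_nonneg h1, abs_of_nonneg (sub_nonneg.2 h)]
        linarith
    simpa only [hFdef] using hlipN.continuous.div_const _
  -- characterization of Q
  have hgt : ∀ w ∈ T, ∀ θ : ℝ, truncNormalCDF ς T θ w < γ → Q w < θ := by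
    intro w hw θ h
    by_contra hcon
    push_neg at hcon
    have h2 := (hanti w hw).antitone hcon
    rw [hQ w hw] at h2
    linarith
  have hlt2 : ∀ w ∈ T, ∀ θ : ℝ, γ < truncNormalCDF ς T θ w → θ < Q w := by
    intro w hw θ h
    by_contra hcon
    push_neg at hcon
    have h2 := (hanti w hw).antitone hcon
    rw [hQ w hw] at h2
    linarith
  -- continuity of Q
  have hQcont : ContinuousOn Q T := by
    intro w₀ hw₀
    apply Metric.tendsto_nhds.2
    intro ε hε
    have h1 : γ < truncNormalCDF ς T (Q w₀ - ε) w₀ := by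
      have := hanti w₀ hw₀ (show Q w₀ - ε < Q w₀ by linarith)
      simp only at this
      rw [hQ w₀ hw₀] at this
      exact this
    have h2 : truncNormalCDF ς T (Q w₀ + ε) w₀ < γ := by
      have := hanti w₀ hw₀ (show Q w₀ < Q w₀ + ε by linarith)
      simp only at this
      rw [hQ w₀ hw₀] at this
      exact this
    have e1 : ∀ᶠ w in nhds w₀, γ < truncNormalCDF ς T (Q w₀ - ε) w :=
      ((hcont (Q w₀ - ε)).tendsto w₀).eventually_const_lt h1
    have e2 : ∀ᶠ w in nhds w₀, truncNormalCDF ς T (Q w₀ + ε) w < γ :=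
      ((hcont (Q w₀ + ε)).tendsto w₀).eventually_lt_const h2
    filter_upwards [nhdsWithin_le_nhds e1, nhdsWithin_le_nhds e2, self_mem_nhdsWithin]
    intro w he1 he2 hwT
    have l1 := hlt2 w hwT _ he1
    have l2 := hgt w hwT _ he2
    rw [Real.dist_eq, abs_lt]
    exact ⟨by linarith, by linarith⟩
  -- strict monotonicity of Q
  have hQmono : StrictMonoOn Q T := by
    intro w₁ h₁ w₂ h₂ h12
    refine hgt w₁ h₁ _ ?_
    have := hmonoW (Q w₂) w₁ h₁ w₂ h12
    rwa [hQ w₂ h₂] at this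
  -- endpoint bounds for T
  have hamono : ∀ i, i < K → a 0 ≤ a i := by
    intro i
    induction i with
    | zero => exact fun _ => le_rfl
    | succ n ih =>
      intro h
      have hn : n < K := by omega
      exact (ih hn).trans ((hab n hn).le.trans (hba n h).le)
  have hbmono : ∀ j, j < K → ∀ i, i ≤ j → b i ≤ b j := by
    intro j
    induction j with
    | zero =>
      intro _ i hi
      rw [Nat.le_zero.1 hi]
    | succ n ih =>
      intro h i hi
      rcases Nat.eq_or_lt_of_le hi with heq | hlt
      · rw [heq]
      · have hn : i ≤ n := by omega
        exact (ih (by omega) i hn).trans ((hba n h).le.trans (hab (n+1) h).le)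
  have hlb : ∀ x ∈ T, a 0 < (x : EReal) := by
    intro x hx
    obtain ⟨i, hi, h1, _⟩ := (hmem x).1 hx
    exact lt_of_le_of_lt (hamono i hi) h1
  have hKK : K - 1 < K := Nat.sub_lt hK0 one_pos
  have hub : ∀ x ∈ T, (x : EReal) < b (K - 1) := by
    intro x hx
    obtain ⟨i, hi, _, h2⟩ := (hmem x).1 hx
    exact lt_of_lt_of_le h2 (hbmono (K-1) hKK i (by omega))
  refine ⟨hQcont, hQmono, ?_, ?_⟩
  -- tendsto atBot at left endpoint
  · rw [tendsto_atBot]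
    intro M
    have hDp := hDpos M
    set ε : ℝ := γ * (μ M T).toReal with hεdef
    have hε : 0 < ε := by positivity
    have himp : ∀ w ∈ T, (μ M (Iic w ∩ T)).toReal < ε → Q w ≤ M := by
      intro w hw hlt
      refine le_of_lt (hgt w hw M ?_)
      rw [hFdef, div_lt_iff₀ hDp]
      exact hlt
    rw [eventually_inf_principal]
    have hane : a 0 ≠ ⊤ := ((hab 0 hK0).trans_le le_top).ne
    by_cases hbot : a 0 = ⊥
    · have hiInter : ⋂ (r : ℝ), Iic r = (∅ : Set ℝ) := by
        ext y
        simp only [mem_iInter, mem_Iic, mem_empty_iff_false, iff_false, not_forall, not_le]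
        exact ⟨y - 1, by linarith⟩
      have htend : Tendsto (fun x : ℝ => μ M (Iic x)) atBot (nhds 0) := by
        have h := tendsto_measure_iInter_atBot (μ := μ M) (s := fun x : ℝ => Iic x)
          (fun _ => measurableSet_Iic.nullMeasurableSet)
          (fun i j hij => Iic_subset_Iic.2 hij) ⟨0, hfin _ _⟩
        rwa [hiInter, measure_empty] at h
      obtain ⟨w₀, hw₀⟩ := (htend.eventually_lt_const
        (show (0:ℝ≥0∞) < ENNReal.ofReal ε from ENNReal.ofReal_pos.2 hε)).exists
      rw [hbot]
      filter_upwards [preimage_mem_comap (isOpen_Iio.mem_nhds (EReal.bot_lt_coe w₀))]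
      intro w hw hwT
      have hww₀ : w < w₀ := EReal.coe_lt_coe_iff.1 hw
      refine himp w hwT ?_
      calc (μ M (Iic w ∩ T)).toReal
          ≤ (μ M (Iic w₀)).toReal := ENNReal.toReal_mono (hfin _ _)
            (measure_mono fun x hx => le_of_lt (lt_of_le_of_lt hx.1 hww₀))
        _ < ε := ENNReal.toReal_lt_of_lt_ofReal hw₀
    · obtain ⟨r, hr⟩ : ∃ r : ℝ, a 0 = (r : EReal) :=
        ⟨(a 0).toReal, (EReal.coe_toReal hane hbot).symm⟩
      set δ : ℝ := ε / (2 * C) with hδdef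
      have hδ : 0 < δ := by positivity
      rw [hr]
      filter_upwards [preimage_mem_comap (isOpen_Iio.mem_nhds
        (show ((r:EReal)) < ((r + δ : ℝ) : EReal) from EReal.coe_lt_coe_iff.2 (by linarith)))]
      intro w hw hwT
      have hw2 : w < r + δ := EReal.coe_lt_coe_iff.1 hw
      have hw1 : r < w := EReal.coe_lt_coe_iff.1 (hr ▸ hlb w hwT)
      refine himp w hwT ?_
      have hsub : Iic w ∩ T ⊆ Ioc r w := fun x hx =>
        ⟨EReal.coe_lt_coe_iff.1 (hr ▸ hlb x hx.2), hx.1⟩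
      have h1 : μ M (Iic w ∩ T) ≤ ENNReal.ofReal (C * (w - r)) :=
        (measure_mono hsub).trans (TruncAux.gauss_Ioc_le hv M r w)
      have h2 := ENNReal.toReal_mono ENNReal.ofReal_ne_top h1
      rw [ENNReal.toReal_ofReal (by nlinarith)] at h2
      have h3 : C * (w - r) < C * δ := by nlinarith
      have hCδ : C * δ = ε / 2 := by
        rw [hδdef]
        field_simp
      linarith
  -- tendsto atTop at right endpoint
  · rw [tendsto_atTop]
    intro M
    have hDp := hDpos M
    set ε : ℝ := (1 - γ) * (μ M T).toReal with hεdef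
    have hε : 0 < ε := by
      have : 0 < 1 - γ := by linarith
      positivity
    have himp : ∀ w ∈ T, (μ M (Ioi w ∩ T)).toReal < ε → M ≤ Q w := by
      intro w hw hlt
      refine le_of_lt (hlt2 w hw M ?_)
      rw [hFdef, lt_div_iff₀ hDp]
      have hs := hsum M w
      linarith
    rw [eventually_inf_principal]
    have hbne : b (K-1) ≠ ⊥ := (lt_of_le_of_lt bot_le (hab (K-1) hKK)).ne'
    by_cases htop : b (K - 1) = ⊤
    · have hiInter : ⋂ (r : ℝ), Ioi r = (∅ : Set ℝ) := by
        ext y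
        simp only [mem_iInter, mem_Ioi, mem_empty_iff_false, iff_false, not_forall, not_lt]
        exact ⟨y, le_rfl⟩
      have htend : Tendsto (fun x : ℝ => μ M (Ioi x)) atTop (nhds 0) := by
        have h := tendsto_measure_iInter_atTop (μ := μ M) (s := fun x : ℝ => Ioi x)
          (fun _ => measurableSet_Ioi.nullMeasurableSet)
          (fun i j hij x hx => lt_of_le_of_lt hij hx) ⟨0, hfin _ _⟩
        rwa [hiInter, measure_empty] at h
      obtain ⟨w₀, hw₀⟩ := (htend.eventually_lt_const
        (show (0:ℝ≥0∞) < ENNReal.ofReal ε from ENNReal.ofReal_pos.2 hε)).exists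
      rw [htop]
      filter_upwards [preimage_mem_comap (isOpen_Ioi.mem_nhds (EReal.coe_lt_top w₀))]
      intro w hw hwT
      have hww₀ : w₀ < w := EReal.coe_lt_coe_iff.1 hw
      refine himp w hwT ?_
      calc (μ M (Ioi w ∩ T)).toReal
          ≤ (μ M (Ioi w₀)).toReal := ENNReal.toReal_mono (hfin _ _)
            (measure_mono fun x hx => lt_trans hww₀ hx.1)
        _ < ε := ENNReal.toReal_lt_of_lt_ofReal hw₀
    · obtain ⟨r, hr⟩ : ∃ r : ℝ, b (K - 1) = (r : EReal) :=
        ⟨(b (K-1)).toReal, (EReal.coe_toReal htop hbne).symm⟩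
      set δ : ℝ := ε / (2 * C) with hδdef
      have hδ : 0 < δ := by positivity
      rw [hr]
      filter_upwards [preimage_mem_comap (isOpen_Ioi.mem_nhds
        (show ((r - δ : ℝ) : EReal) < ((r:EReal)) from EReal.coe_lt_coe_iff.2 (by linarith)))]
      intro w hw hwT
      have hw2 : r - δ < w := EReal.coe_lt_coe_iff.1 hw
      have hw1 : w < r := EReal.coe_lt_coe_iff.1 (hr ▸ hub w hwT)
      refine himp w hwT ?_
      have hsub : Ioi w ∩ T ⊆ Ioc w r := fun x hx =>
        ⟨hx.1, (EReal.coe_lt_coe_iff.1 (hr ▸ hub x hx.2)).le⟩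
      have h1 : μ M (Ioi w ∩ T) ≤ ENNReal.ofReal (C * (r - w)) :=
        (measure_mono hsub).trans (TruncAux.gauss_Ioc_le hv M w r)
      have h2 := ENNReal.toReal_mono ENNReal.ofReal_ne_top h1
      rw [ENNReal.toReal_ofReal (by nlinarith)] at h2
      have h3 : C * (r - w) < C * δ := by nlinarith
      have hCδ : C * δ = ε / 2 := by
        rw [hδdef]
        field_simp
      linarith
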